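/- Assume n ≥ 2, u* ∈ bd K_{n+1}, H ∩ int K_{n+1} = ∅, and H ∩ bd K_{n+1} = {u*}. Let u = u* + B t ∈ H with u ≠ u*, and assume u ∉ K_{n+1}. Write u = (u₀; u₁) ∈ ℝ × ℝⁿ (so u₁ ≠ 0), and set λ₁ = (u₀ + ‖u₁‖)/√2 and e₁ = (1/√2)(1; u₁/‖u₁‖). Let v be the unique nearest point of K_{n+1} to u and let ũ be the unique nearest point of H to v; assume ũ ∉ K_{n+1}. Then ũ = u* + B t̃ with t̃ = Bᵀ(λ₁ e₁ − u*). -/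

import Mathlib

/-- Euclidean norm of the tail `x₁` of `x = (x₀; x₁) ∈ ℝ × ℝⁿ`. -/
noncomputable def tailNorm {n : ℕ} (x : EuclideanSpace ℝ (Fin (n + 1))) : ℝ :=
  Real.sqrt (∑ i : Fin n, x i.succ ^ 2)

/-- The second-order cone `K_{n+1} = {(x₀; x₁) : ‖x₁‖ ≤ x₀}`. -/
def soc (n : ℕ) : Set (EuclideanSpace ℝ (Fin (n + 1))) :=
  {x | tailNorm x ≤ x 0}

/-- The boundary of the second-order cone: `{(x₀; x₁) : ‖x₁‖ = x₀}`. -/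
def socBd (n : ℕ) : Set (EuclideanSpace ℝ (Fin (n + 1))) :=
  {x | tailNorm x = x 0}

/-- The interior of the second-order cone: `{(x₀; x₁) : ‖x₁‖ < x₀}`. -/
def socInt (n : ℕ) : Set (EuclideanSpace ℝ (Fin (n + 1))) :=
  {x | tailNorm x < x 0}

/-- `x̂ = (x₀; −x₁)` for `x = (x₀; x₁)`. -/
def socHat {n : ℕ} (x : EuclideanSpace ℝ (Fin (n + 1))) : EuclideanSpace ℝ (Fin (n + 1)) :=
  WithLp.toLp 2 (fun i => if i = 0 then x 0 else -(x i))

/-- `B t` viewed as an element of Euclidean space. -/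
def mvE {m p : ℕ} (B : Matrix (Fin m) (Fin p) ℝ) (t : Fin p → ℝ) : EuclideanSpace ℝ (Fin m) :=
  WithLp.toLp 2 (fun i => B.mulVec t i)

/-- A Euclidean vector viewed as a plain function. -/
def toFun {m : ℕ} (x : EuclideanSpace ℝ (Fin m)) : Fin m → ℝ := x

lemma enorm_sq {m : ℕ} (x : EuclideanSpace ℝ (Fin m)) : ‖x‖^2 = ∑ i, x i ^ 2 := by
  rw [EuclideanSpace.norm_eq, Real.sq_sqrt (by positivity)]
  simp [sq_abs]

lemma cs_sum {m : ℕ} (f g : Fin m → ℝ) :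
    (∑ i, f i * g i) ≤ Real.sqrt (∑ i, f i ^ 2) * Real.sqrt (∑ i, g i ^ 2) := by
  have h := Finset.sum_mul_sq_le_sq_mul_sq Finset.univ f g
  have h2 : (∑ i, f i * g i) ≤ Real.sqrt ((∑ i, f i * g i)^2) := by
    rw [Real.sqrt_sq_eq_abs]; exact le_abs_self _
  calc (∑ i, f i * g i) ≤ Real.sqrt ((∑ i, f i * g i)^2) := h2
    _ ≤ Real.sqrt ((∑ i, f i ^ 2) * (∑ i, g i ^ 2)) := Real.sqrt_le_sqrt h
    _ = _ := Real.sqrt_mul (by positivity) _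

lemma lemA {m : ℕ} (a w v : EuclideanSpace ℝ (Fin m))
    (h1 : 0 ≤ ∑ i, (a i - w i) * (w i - v i)) (h2 : ‖a - v‖ ≤ ‖a - w‖) : v = w := by
  have key : ∀ (y z : EuclideanSpace ℝ (Fin m)), ‖y - z‖^2 = ∑ i, (y i - z i)^2 := by
    intro y z
    rw [enorm_sq]
    exact Finset.sum_congr rfl (fun i _ => by simp)
  have hle : ‖a - v‖^2 ≤ ‖a - w‖^2 := by
    have h0 : (0:ℝ) ≤ ‖a - w‖ := norm_nonneg _
    nlinarith [norm_nonneg (a - v)]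
  rw [key, key] at hle
  have expand : ∑ i, (a i - v i)^2 =
      ∑ i, (a i - w i)^2 + 2*(∑ i, (a i - w i) * (w i - v i)) + ∑ i, (w i - v i)^2 := by
    rw [Finset.mul_sum, ← Finset.sum_add_distrib, ← Finset.sum_add_distrib]
    exact Finset.sum_congr rfl (fun i _ => by ring)
  have hzero : ∑ i, (w i - v i)^2 ≤ 0 := by linarith
  have hall : ∀ i ∈ Finset.univ, (w i - v i)^2 = 0 := by
    rw [← Finset.sum_eq_zero_iff_of_nonneg (fun i _ => sq_nonneg _)]
    exact le_antisymm hzero (Finset.sum_nonneg fun i _ => sq_nonneg _)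
  ext i
  have := hall i (Finset.mem_univ i)
  have := pow_eq_zero_iff (n := 2) (by norm_num) |>.mp this
  linarith

lemma dot_swap {m q : ℕ} (B : Matrix (Fin m) (Fin q) ℝ) (a : Fin m → ℝ) (r : Fin q → ℝ) :
    ∑ j, a j * (B.mulVec r) j = ∑ k, (B.transpose.mulVec a) k * r k := by
  simp only [Matrix.mulVec, dotProduct, Matrix.transpose_apply, Finset.mul_sum,
    Finset.sum_mul]
  rw [Finset.sum_comm]
  exact Finset.sum_congr rfl fun k _ => Finset.sum_congr rfl fun j _ => by ring

set_option maxHeartbeats 1000000 in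
/-- One iteration of the alternating projection method: with `H ∩ bd K_{n+1} = {u*}`,
`u = u* + B t ∈ H`, `u ≠ u*`, `u ∉ K_{n+1}`, if `v = P_K(u)` and `ũ = P_H(v) ∉ K_{n+1}`,
then `ũ = u* + B t̃` with `t̃ = Bᵀ(λ₁ e₁ − u*)`, where `λ₁ = (u₀ + ‖u₁‖)/√2` and
`e₁ = (1/√2)(1; u₁/‖u₁‖)`. -/
theorem stmt12 (n p : ℕ) (hn : 2 ≤ n)
    (B : Matrix (Fin (n + 1)) (Fin p) ℝ) (hB : B.transpose * B = 1)
    (ustar : EuclideanSpace ℝ (Fin (n + 1))) (hustar : ustar ∈ socBd n)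
    (H : Set (EuclideanSpace ℝ (Fin (n + 1))))
    (hH : H = {u | ∃ t : Fin p → ℝ, u = ustar + mvE B t})
    (hdisj : H ∩ socInt n = ∅)
    (hsingle : H ∩ socBd n = {ustar})
    (u : EuclideanSpace ℝ (Fin (n + 1))) (t : Fin p → ℝ)
    (hu : u = ustar + mvE B t) (hune : u ≠ ustar) (huK : u ∉ soc n)
    (lam1 : ℝ) (hlam1 : lam1 = (u 0 + tailNorm u) / Real.sqrt 2)
    (e1 : EuclideanSpace ℝ (Fin (n + 1)))
    (he1 : e1 = fun i => if i = 0 then 1 / Real.sqrt 2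
      else (1 / Real.sqrt 2) * (u i / tailNorm u))
    (v : EuclideanSpace ℝ (Fin (n + 1)))
    (hv : v ∈ soc n) (hvnear : ∀ w ∈ soc n, ‖u - v‖ ≤ ‖u - w‖)
    (ut : EuclideanSpace ℝ (Fin (n + 1)))
    (hut : ut ∈ H) (hutnear : ∀ w ∈ H, ‖v - ut‖ ≤ ‖v - w‖)
    (hutK : ut ∉ soc n) :
    ut = ustar + mvE B (B.transpose.mulVec (toFun (lam1 • e1 - ustar))) := by
  set N := tailNorm u with hN
  have hNnonneg : 0 ≤ N := Real.sqrt_nonneg _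
  have Nsq : N ^ 2 = ∑ i : Fin n, u i.succ ^ 2 := Real.sq_sqrt (by positivity)
  have hu0lt : u 0 < N := lt_of_not_ge huK
  -- Step 1: u 0 + N > 0
  have hpos : 0 < u 0 + N := by
    by_contra hcon0
    push_neg at hcon0
    have hcon : u 0 + N ≤ 0 := hcon0
    have hs0 : tailNorm ustar = ustar 0 := hustar
    have hs0nonneg : 0 ≤ ustar 0 := hs0 ▸ Real.sqrt_nonneg _
    have ssq : ustar 0 ^ 2 = ∑ i : Fin n, ustar i.succ ^ 2 := by
      rw [← hs0]
      exact Real.sq_sqrt (by positivity)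
    rcases eq_or_lt_of_le hs0nonneg with hzero | hs0pos
    · -- case ustar = 0
      have htail0 : ∀ i : Fin n, ustar i.succ = 0 := by
        have hsum : ∑ i : Fin n, ustar i.succ ^ 2 = 0 := by rw [← ssq, ← hzero]; norm_num
        intro i
        have h := (Finset.sum_eq_zero_iff_of_nonneg (fun i _ => sq_nonneg _)).mp hsum i
          (Finset.mem_univ i)
        exact pow_eq_zero_iff (n := 2) (by norm_num) |>.mp h
      have hstar0 : ustar = 0 := by
        ext j
        refine Fin.cases ?_ (fun i => ?_) j
        · simpa using hzero.symm
        · simpa using htail0 i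
      have huj : ∀ j, u j = B.mulVec t j := by
        intro j
        rw [hu, hstar0]
        show (0 : EuclideanSpace ℝ (Fin (n+1))) j + mvE B t j = _
        simp [mvE]
      have hmu : -u = ustar + mvE B (-t) := by
        rw [hstar0]
        ext j
        show (-u) j = (0 : EuclideanSpace ℝ (Fin (n+1))) j + mvE B (-t) j
        simp [mvE, Matrix.mulVec_neg, huj j]
      have hmuH : -u ∈ H := by rw [hH]; exact ⟨-t, hmu⟩
      have htailmu : tailNorm (-u) = N := by
        rw [hN]
        unfold tailNorm
        congr 1
        exact Finset.sum_congr rfl fun i _ => by simp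
      have hmu0 : (-u) 0 = -(u 0) := by simp
      have hNle : N ≤ -(u 0) := by linarith
      rcases lt_or_eq_of_le hNle with hlt | heq
      · have hmem : -u ∈ H ∩ socInt n := by
          refine ⟨hmuH, ?_⟩
          show tailNorm (-u) < (-u) 0
          rw [htailmu, hmu0]
          exact hlt
        rw [hdisj] at hmem
        exact hmem
      · have hmem : -u ∈ H ∩ socBd n := by
          refine ⟨hmuH, ?_⟩
          show tailNorm (-u) = (-u) 0
          rw [htailmu, hmu0]
          exact heq
        rw [hsingle] at hmem
        have : -u = ustar := hmem
        rw [hstar0, neg_eq_zero] at this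
        apply huK
        show tailNorm u ≤ u 0
        rw [this]
        unfold tailNorm
        simp
    · -- case 0 < ustar 0
      have halpha : ∀ t' : Fin p → ℝ,
          ustar 0 * (B.mulVec t') 0 - (∑ i : Fin n, ustar i.succ * (B.mulVec t') i.succ) ≤ 0 := by
        intro t'
        set d : Fin (n+1) → ℝ := B.mulVec t' with hd
        by_contra hcon2
        push_neg at hcon2
        set α : ℝ := ustar 0 * d 0 - ∑ i : Fin n, ustar i.succ * d i.succ with hαdef
        set C : ℝ := (∑ i : Fin n, d i.succ ^ 2) - d 0 ^ 2 with hCdef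
        set ε : ℝ := min (ustar 0 / (|d 0| + 1)) (α / (|C| + 1)) with hεdef
        have hεpos : 0 < ε := lt_min (by positivity) (by positivity)
        have hεd0 : ε * |d 0| < ustar 0 := by
          calc ε * |d 0| ≤ (ustar 0 / (|d 0| + 1)) * |d 0| :=
              mul_le_mul_of_nonneg_right (min_le_left _ _) (abs_nonneg _)
            _ < ustar 0 := by
              rw [div_mul_eq_mul_div, div_lt_iff₀ (by positivity)]
              nlinarith [abs_nonneg (d 0), hs0pos]
        have hx0pos : 0 < ustar 0 + ε * d 0 := by
          have h1 := neg_abs_le (d 0)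
          nlinarith [hεpos, hεd0]
        have hεC : ε * C < 2 * α := by
          calc ε * C ≤ ε * |C| := mul_le_mul_of_nonneg_left (le_abs_self _) hεpos.le
            _ ≤ (α / (|C| + 1)) * |C| := mul_le_mul_of_nonneg_right (min_le_right _ _) (abs_nonneg _)
            _ < 2 * α := by
              rw [div_mul_eq_mul_div, div_lt_iff₀ (by positivity)]
              nlinarith [abs_nonneg C, hcon2]
        set x : EuclideanSpace ℝ (Fin (n+1)) := ustar + mvE B (ε • t') with hxdef
        have hxH : x ∈ H := by rw [hH]; exact ⟨ε • t', rfl⟩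
        have hxj : ∀ j, x j = ustar j + ε * d j := by
          intro j
          show (ustar + mvE B (ε • t')) j = _
          simp [mvE, Matrix.mulVec_smul, hd]
        have hexp : ∑ i : Fin n, x i.succ ^ 2 =
            (∑ i : Fin n, ustar i.succ ^ 2) + 2 * ε * (∑ i : Fin n, ustar i.succ * d i.succ)
              + ε ^ 2 * (∑ i : Fin n, d i.succ ^ 2) := by
          rw [Finset.mul_sum, Finset.mul_sum, ← Finset.sum_add_distrib, ← Finset.sum_add_distrib]
          exact Finset.sum_congr rfl fun i _ => by rw [hxj i.succ]; ring
        have hxint : x ∈ socInt n := by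
          show tailNorm x < x 0
          unfold tailNorm
          rw [hxj 0]
          rw [Real.sqrt_lt' hx0pos]
          rw [hexp, ← ssq]
          nlinarith [mul_lt_mul_of_pos_left hεC hεpos, hαdef, hCdef]
        have hmem : x ∈ H ∩ socInt n := ⟨hxH, hxint⟩
        rw [hdisj] at hmem
        exact hmem
      have hαt : ∀ t' : Fin p → ℝ,
          ustar 0 * (B.mulVec t') 0 = ∑ i : Fin n, ustar i.succ * (B.mulVec t') i.succ := by
        intro t'
        have h1 := halpha t'
        have h2 := halpha (-t')
        rw [Matrix.mulVec_neg] at h2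
        have e2 : ustar 0 * (-(B.mulVec t')) 0
            - (∑ i : Fin n, ustar i.succ * (-(B.mulVec t')) i.succ)
            = -(ustar 0 * (B.mulVec t') 0) + ∑ i : Fin n, ustar i.succ * (B.mulVec t') i.succ := by
          have e2a : ∑ i : Fin n, ustar i.succ * (-(B.mulVec t')) i.succ
              = ∑ i : Fin n, -(ustar i.succ * (B.mulVec t') i.succ) :=
            Finset.sum_congr rfl fun i _ => by simp
          rw [e2a, Finset.sum_neg_distrib]
          simp only [Pi.neg_apply]
          ring
        rw [e2] at h2
        linarith
      have hBt : ∀ j, B.mulVec t j = u j - ustar j := by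
        intro j
        rw [hu]
        show _ = (ustar + mvE B t) j - ustar j
        simp [mvE]
      have hsu : ∑ i : Fin n, ustar i.succ * u i.succ = ustar 0 * u 0 := by
        have h := hαt t
        simp only [hBt] at h
        have hsplit : ∑ i : Fin n, ustar i.succ * (u i.succ - ustar i.succ)
            = (∑ i : Fin n, ustar i.succ * u i.succ) - ∑ i : Fin n, ustar i.succ ^ 2 := by
          rw [← Finset.sum_sub_distrib]
          exact Finset.sum_congr rfl fun i _ => by ring
        rw [hsplit, ← ssq] at h
        linear_combination -h
      have hCS2 : -(ustar 0 * N) ≤ ∑ i : Fin n, ustar i.succ * u i.succ := by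
        have h := cs_sum (fun i : Fin n => -(ustar i.succ)) (fun i : Fin n => u i.succ)
        have e3 : ∑ i : Fin n, -(ustar i.succ) * u i.succ
            = -(∑ i : Fin n, ustar i.succ * u i.succ) := by
          rw [← Finset.sum_neg_distrib]
          exact Finset.sum_congr rfl fun i _ => by ring
        have e4 : ∑ i : Fin n, (-(ustar i.succ)) ^ 2 = ∑ i : Fin n, ustar i.succ ^ 2 := by
          exact Finset.sum_congr rfl fun i _ => by ring
        rw [e3, e4, ← ssq, ← Nsq, Real.sqrt_sq hs0nonneg, Real.sqrt_sq hNnonneg] at h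
        linarith
    
      have hprod : ustar 0 * (u 0 + N) = 0 := by
        have hle1 : ustar 0 * (u 0 + N) ≤ 0 :=
          mul_nonpos_of_nonneg_of_nonpos hs0pos.le hcon
        have hle2 : 0 ≤ ustar 0 * (u 0 + N) := by nlinarith [hCS2, hsu]
        linarith
      have hu0N : u 0 = -N := by
        rcases mul_eq_zero.mp hprod with h | h
        · exact absurd h (ne_of_gt hs0pos)
        · linarith
      have hNpos2 : 0 < N := by
        rcases lt_or_eq_of_le hNnonneg with h | h
        · exact h
        · exfalso
          apply huK
          show tailNorm u ≤ u 0
          rw [← hN]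
          linarith
      have hs0ne : ustar 0 ≠ 0 := ne_of_gt hs0pos
      have hzsum : ∑ i : Fin n, (u i.succ + (N / ustar 0) * ustar i.succ) ^ 2 = 0 := by
        have hexp : ∑ i : Fin n, (u i.succ + (N / ustar 0) * ustar i.succ) ^ 2
            = (∑ i : Fin n, u i.succ ^ 2)
              + 2 * (N / ustar 0) * (∑ i : Fin n, ustar i.succ * u i.succ)
              + (N / ustar 0) ^ 2 * (∑ i : Fin n, ustar i.succ ^ 2) := by
          rw [Finset.mul_sum, Finset.mul_sum, ← Finset.sum_add_distrib, ← Finset.sum_add_distrib]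
          exact Finset.sum_congr rfl fun i _ => by ring
        rw [hexp, ← Nsq, ← ssq, hsu, hu0N]
        field_simp
        ring
      have htl : ∀ i : Fin n, u i.succ = -(N / ustar 0) * ustar i.succ := by
        intro i
        have h := (Finset.sum_eq_zero_iff_of_nonneg (fun i _ => sq_nonneg _)).mp hzsum i
          (Finset.mem_univ i)
        have := pow_eq_zero_iff (n := 2) (by norm_num) |>.mp h
        linarith
      have hall : ∀ j, u j = -(N / ustar 0) * ustar j := by
        intro j
        refine Fin.cases ?_ (fun i => htl i) j
        rw [hu0N]
        field_simp
      set β : ℝ := -(N / ustar 0) - 1 with hβdef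
      have hβneg : β < 0 := by
        have : 0 < N / ustar 0 := div_pos hNpos2 hs0pos
        rw [hβdef]; linarith
      have hβne : β ≠ 0 := ne_of_lt hβneg
      have hBtβ : ∀ j, B.mulVec t j = β * ustar j := by
        intro j
        rw [hBt j, hall j, hβdef]
        ring
      have hBt2 : ∀ j, B.mulVec ((1/β) • t) j = ustar j := by
        intro j
        rw [Matrix.mulVec_smul]
        show (1/β) * B.mulVec t j = _
        rw [hBtβ j]
        field_simp
      have hxj : ∀ j, (ustar + mvE B ((1/β) • t)) j = 2 * ustar j := by
        intro j
        show ustar j + mvE B ((1/β) • t) j = _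
        show ustar j + B.mulVec ((1/β) • t) j = _
        rw [hBt2 j]
        ring
      have hx2 : (ustar + mvE B ((1/β) • t)) ∈ H ∩ socBd n := by
        refine ⟨by rw [hH]; exact ⟨_, rfl⟩, ?_⟩
        show tailNorm _ = _
        unfold tailNorm
        have hsum2 : ∑ i : Fin n, (ustar + mvE B ((1/β) • t)) i.succ ^ 2 = (2 * ustar 0) ^ 2 := by
          have : ∑ i : Fin n, (ustar + mvE B ((1/β) • t)) i.succ ^ 2
              = 4 * ∑ i : Fin n, ustar i.succ ^ 2 := by
            rw [Finset.mul_sum]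
            exact Finset.sum_congr rfl fun i _ => by rw [hxj i.succ]; ring
          rw [this, ← ssq]
          ring
        rw [hsum2, Real.sqrt_sq (by positivity), hxj 0]
      rw [hsingle] at hx2
      have h20 : (ustar + mvE B ((1/β) • t)) 0 = ustar 0 := by
        have : (ustar + mvE B ((1/β) • t)) = ustar := hx2
        rw [this]
      rw [hxj 0] at h20
      linarith

  have hNpos : 0 < N := by
    by_contra h
    have : N = 0 := le_antisymm (not_lt.mp h) hNnonneg
    rw [this] at hu0lt hpos
    linarith
  -- Step 2: v = lam1 • e1
  have hvw : v = lam1 • e1 := by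
    have hs2 : Real.sqrt 2 * Real.sqrt 2 = 2 := Real.mul_self_sqrt (by norm_num)
    have hs2pos : (0:ℝ) < Real.sqrt 2 := by positivity
    have hNne : N ≠ 0 := ne_of_gt hNpos
    set w : EuclideanSpace ℝ (Fin (n+1)) := lam1 • e1 with hwdef
    have he10 : e1 0 = 1 / Real.sqrt 2 := by rw [he1]; simp
    have he1i : ∀ i : Fin n, e1 i.succ = 1 / Real.sqrt 2 * (u i.succ / N) := by
      intro i
      rw [he1]
      simp [Fin.succ_ne_zero i]
    have hlam2 : lam1 * (1 / Real.sqrt 2) = (u 0 + N) / 2 := by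
      rw [hlam1]
      rw [div_mul_div_comm, hs2, mul_one]
    have hw0 : w 0 = (u 0 + N) / 2 := by
      show lam1 * e1 0 = _
      rw [he10]
      exact hlam2
    have hwi : ∀ i : Fin n, w i.succ = ((u 0 + N)/(2*N)) * u i.succ := by
      intro i
      show lam1 * e1 i.succ = _
      rw [he1i i, ← mul_assoc, hlam2]
      field_simp
    have htailw : ∑ i : Fin n, w i.succ ^ 2 = ((u 0 + N)/(2*N))^2 * N^2 := by
      rw [Nsq, Finset.mul_sum]
      exact Finset.sum_congr rfl fun i _ => by rw [hwi i]; ring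
    have hwK : w ∈ soc n := by
      show tailNorm w ≤ w 0
      unfold tailNorm
      rw [htailw, Real.sqrt_mul (sq_nonneg _), Real.sqrt_sq (by positivity),
        Real.sqrt_sq hNnonneg, hw0]
      rw [div_mul_eq_mul_div, mul_comm]
      rw [show N * (u 0 + N) / (2*N) = (u 0 + N)/2 by field_simp]
    have hA : ∑ j, (u j - w j) * w j = 0 := by
      rw [Fin.sum_univ_succ]
      have htail : ∑ i : Fin n, (u i.succ - w i.succ) * w i.succ
          = (1 - (u 0 + N)/(2*N)) * ((u 0 + N)/(2*N)) * N^2 := by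
        rw [Nsq, Finset.mul_sum]
        exact Finset.sum_congr rfl fun i _ => by rw [hwi i]; ring
      rw [htail, hw0]
      field_simp
      ring
    have hCS : ∑ i : Fin n, u i.succ * v i.succ ≤ N * tailNorm v := by
      have h := cs_sum (fun i : Fin n => u i.succ) (fun i => v i.succ)
      unfold tailNorm
      rw [hN]
      unfold tailNorm
      exact h
    have htv : 0 ≤ tailNorm v := Real.sqrt_nonneg _
    have hv' : tailNorm v ≤ v 0 := hv
    have h1c : 0 ≤ 1 - (u 0 + N)/(2*N) := by
      rw [sub_nonneg, div_le_one (by positivity)]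
      linarith
    have hB2 : ∑ j, (u j - w j) * v j ≤ 0 := by
      rw [Fin.sum_univ_succ]
      have htail : ∑ i : Fin n, (u i.succ - w i.succ) * v i.succ
          = (1 - (u 0 + N)/(2*N)) * ∑ i : Fin n, u i.succ * v i.succ := by
        rw [Finset.mul_sum]
        exact Finset.sum_congr rfl fun i _ => by rw [hwi i]; ring
      rw [htail, hw0]
      have hc1 : (1 - (u 0 + N)/(2*N)) * (∑ i : Fin n, u i.succ * v i.succ)
          ≤ (1 - (u 0 + N)/(2*N)) * (N * v 0) := by
        apply mul_le_mul_of_nonneg_left _ h1c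
        calc ∑ i : Fin n, u i.succ * v i.succ ≤ N * tailNorm v := hCS
          _ ≤ N * v 0 := by nlinarith
      have hkey : (1 - (u 0 + N)/(2*N)) * (N * v 0) = (N - u 0)/2 * v 0 := by
        field_simp
        ring
      have hv0 : 0 ≤ v 0 := le_trans htv hv'
      linarith [hc1, hkey]
    have h1 : 0 ≤ ∑ j, (u j - w j) * (w j - v j) := by
      have hsplit : ∑ j, (u j - w j) * (w j - v j)
          = ∑ j, (u j - w j) * w j - ∑ j, (u j - w j) * v j := by
        rw [← Finset.sum_sub_distrib]
        exact Finset.sum_congr rfl fun j _ => by ring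
      rw [hsplit, hA]
      linarith
    exact lemA u w v h1 (hvnear w hwK)
  -- Step 3: ut = P_H v
  have hfin : ut = ustar + mvE B (B.transpose.mulVec (toFun (v - ustar))) := by
    set y : Fin (n+1) → ℝ := fun j => v j - ustar j with hy
    set z : Fin p → ℝ := B.transpose.mulVec (toFun (v - ustar)) with hz
    have hzy : z = B.transpose.mulVec y := by
      have hty : toFun (v - ustar) = y := by funext j; simp [toFun, hy]
      rw [hz, hty]
    set w2 : EuclideanSpace ℝ (Fin (n+1)) := ustar + mvE B z with hw2
    have hw2H : w2 ∈ H := by rw [hH]; exact ⟨z, rfl⟩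
    have horthB : ∀ r : Fin p → ℝ, ∑ j, (v j - w2 j) * (B.mulVec r) j = 0 := by
      intro r
      have hv2 : ∀ j, v j - w2 j = y j - (B.mulVec z) j := by
        intro j
        show v j - (ustar + mvE B z) j = _
        simp [mvE, hy]
        ring
      calc ∑ j, (v j - w2 j) * (B.mulVec r) j
          = ∑ j, y j * (B.mulVec r) j - ∑ j, (B.mulVec z) j * (B.mulVec r) j := by
            rw [← Finset.sum_sub_distrib]
            exact Finset.sum_congr rfl fun j _ => by rw [hv2 j]; ring
        _ = ∑ k, (B.transpose.mulVec y) k * r k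
            - ∑ k, (B.transpose.mulVec (B.mulVec z)) k * r k := by
            rw [dot_swap, dot_swap]
        _ = 0 := by
            rw [Matrix.mulVec_mulVec, hB, Matrix.one_mulVec, ← hzy, sub_self]
    obtain ⟨s, hs⟩ : ∃ s, ut = ustar + mvE B s := by rw [hH] at hut; exact hut
    have hdiff : ∀ j, w2 j - ut j = (B.mulVec (z - s)) j := by
      intro j
      rw [hs]
      show (ustar + mvE B z) j - (ustar + mvE B s) j = _
      simp [mvE, Matrix.mulVec_sub]
    have h1 : 0 ≤ ∑ j, (v j - w2 j) * (w2 j - ut j) := by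
      have heq : ∑ j, (v j - w2 j) * (w2 j - ut j)
          = ∑ j, (v j - w2 j) * (B.mulVec (z - s)) j :=
        Finset.sum_congr rfl fun j _ => by rw [hdiff j]
      rw [heq, horthB]
    exact lemA v w2 ut h1 (hutnear w2 hw2H)
  rw [← hvw]
  exact hfin
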